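/- Let α ∈ (0,1/2) be irrational. Then for every k ≥ 1: ∫_0^1 Ψ_{ℓ_k(0)}(x) dx ≥ (1/(4·ℓ_k(0))) · ∑_{ν∈ℤ} U_k^{(1)}(ν)². -/

import Mathlib

open MeasureTheory
open scoped ENNReal

/-- `φ(x) = 1` if the fractional part of `x` lies in `[0,1/2)`, and `−1` otherwise. -/
noncomputable def phi (x : ℝ) : ℤ := if Int.fract x < 1/2 then 1 else -1

/-- The discrepancy cocycle `φ_n(x) = ∑_{k<n} φ(x + kα)`. -/
noncomputable def phiN (α : ℝ) (n : ℕ) (x : ℝ) : ℤ :=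
  ∑ k ∈ Finset.range n, phi (x + k * α)

/-- `Ψ_n(x) = #{0 ≤ k ≤ n−1 : φ_k(x) = 0}`. -/
noncomputable def Psi (α : ℝ) (n : ℕ) (x : ℝ) : ℕ :=
  ((Finset.range n).filter (fun k => phiN α k x = 0)).card

/-- `β_k`: the orbit of `β` under the minus (modified) continued fraction algorithm. -/
noncomputable def betaSeq (β : ℝ) : ℕ → ℝ
  | 0 => β
  | k+1 => (⌈1 / betaSeq β k⌉ : ℝ) - 1 / betaSeq β k

/-- The minus continued fraction digits: `nDigit β k = n_{k+1} = ⌈1/β_k⌉`. -/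
noncomputable def nDigit (β : ℝ) (k : ℕ) : ℤ := ⌈1 / betaSeq β k⌉

/-- Block lengths `(ℓ_k(0), ℓ_k(1))`. -/
noncomputable def ell (β : ℝ) : ℕ → ℕ × ℕ
  | 0 => (1, 1)
  | k+1 => ((nDigit β k - 1).toNat * (ell β k).1 + (ell β k).2,
            (nDigit β k - 2).toNat * (ell β k).1 + (ell β k).2)

/-- Visit distribution: `U_k^{(i)}(ν) = #{1 ≤ n ≤ ℓ_k(i) : φ_n(0) = ν}` (data from `β = 2α`). -/
noncomputable def visitU (α : ℝ) (k : ℕ) (i : ℕ) (ν : ℤ) : ℕ :=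
  ((Finset.Icc 1 (if i = 0 then (ell (2*α) k).1 else (ell (2*α) k).2)).filter
    (fun n => phiN α n 0 = ν)).card

section Aux

/-! ### Minus continued fraction theory -/

noncomputable def qseq (β : ℝ) : ℕ → ℤ × ℤ
  | 0 => (1, 0)
  | k+1 => (nDigit β k * (qseq β k).1 - (qseq β k).2, (qseq β k).1)

noncomputable def pseq (β : ℝ) : ℕ → ℤ × ℤ
  | 0 => (0, -1)
  | k+1 => (nDigit β k * (pseq β k).1 - (pseq β k).2, (pseq β k).1)

noncomputable def Rprod (β : ℝ) (k : ℕ) : ℝ := ∏ i ∈ Finset.range k, betaSeq β i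

variable {β : ℝ}

lemma betaSeq_props (hβ : Irrational β) (h0 : 0 < β) (h1 : β < 1) :
    ∀ k, Irrational (betaSeq β k) ∧ 0 < betaSeq β k ∧ betaSeq β k < 1 := by
  intro k
  induction k with
  | zero => exact ⟨hβ, h0, h1⟩
  | succ k ih =>
    obtain ⟨hirr, hp, hl⟩ := ih
    have hne : betaSeq β k ≠ 0 := ne_of_gt hp
    have hinv : Irrational (1 / betaSeq β k) := by
      simpa [one_div] using hirr.inv
    constructor
    · show Irrational ((⌈1 / betaSeq β k⌉ : ℝ) - 1 / betaSeq β k)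
      exact Irrational.intCast_sub hinv _
    constructor
    · show (0:ℝ) < (⌈1 / betaSeq β k⌉ : ℝ) - 1 / betaSeq β k
      have := Int.le_ceil (1 / betaSeq β k)
      rcases lt_or_eq_of_le this with h | h
      · linarith
      · exfalso; exact hinv ⟨⌈1 / betaSeq β k⌉, by exact_mod_cast h.symm⟩
    · show (⌈1 / betaSeq β k⌉ : ℝ) - 1 / betaSeq β k < 1
      have := Int.ceil_lt_add_one (1 / betaSeq β k)
      linarith

lemma nDigit_ge_two (hβ : Irrational β) (h0 : 0 < β) (h1 : β < 1) (k : ℕ) :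
    2 ≤ nDigit β k := by
  obtain ⟨hirr, hp, hl⟩ := betaSeq_props hβ h0 h1 k
  have : (1:ℝ) < 1 / betaSeq β k := by
    rw [lt_div_iff₀ hp]; linarith
  have : (1:ℝ) < (⌈1 / betaSeq β k⌉ : ℝ) := lt_of_lt_of_le this (Int.le_ceil _)
  have h2 : (1:ℤ) < ⌈1 / betaSeq β k⌉ := by exact_mod_cast this
  rw [nDigit]; omega

lemma qseq_snd (k : ℕ) : (qseq β (k+1)).2 = (qseq β k).1 := rfl
lemma pseq_snd (k : ℕ) : (pseq β (k+1)).2 = (pseq β k).1 := rfl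

lemma qseq_pos (hβ : Irrational β) (h0 : 0 < β) (h1 : β < 1) :
    ∀ k, 0 ≤ (qseq β k).2 ∧ (qseq β k).2 < (qseq β k).1 := by
  intro k
  induction k with
  | zero => exact ⟨le_refl 0, by norm_num [qseq]⟩
  | succ k ih =>
    obtain ⟨h2, hlt⟩ := ih
    have hn := nDigit_ge_two hβ h0 h1 k
    refine ⟨by simpa [qseq_snd] using le_trans h2 hlt.le, ?_⟩
    show (qseq β k).1 < nDigit β k * (qseq β k).1 - (qseq β k).2
    nlinarith [hlt, h2]

lemma Rprod_pos (hβ : Irrational β) (h0 : 0 < β) (h1 : β < 1) (k : ℕ) :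
    0 < Rprod β k := by
  apply Finset.prod_pos
  intro i _
  exact (betaSeq_props hβ h0 h1 i).2.1

lemma err_eq (hβ : Irrational β) (h0 : 0 < β) (h1 : β < 1) :
    ∀ k, ((qseq β k).1 : ℝ) * β - (pseq β k).1 = Rprod β (k+1) ∧
         ((qseq β k).2 : ℝ) * β - (pseq β k).2 = Rprod β k := by
  intro k
  induction k with
  | zero =>
    constructor
    · simp [qseq, pseq, Rprod, betaSeq]
    · simp [qseq, pseq, Rprod]
  | succ k ih =>
    obtain ⟨hE, hE'⟩ := ih
    refine ⟨?_, by simpa [qseq_snd, pseq_snd] using hE⟩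
    show ((nDigit β k * (qseq β k).1 - (qseq β k).2 : ℤ) : ℝ) * β
        - ((nDigit β k * (pseq β k).1 - (pseq β k).2 : ℤ) : ℝ) = Rprod β (k+2)
    have hbk : betaSeq β k ≠ 0 := ne_of_gt (betaSeq_props hβ h0 h1 k).2.1
    have hR : Rprod β (k+2) = Rprod β (k+1) * betaSeq β (k+1) := by
      simp [Rprod, Finset.prod_range_succ]
    have hR1 : Rprod β (k+1) = Rprod β k * betaSeq β k := by
      simp [Rprod, Finset.prod_range_succ]
    have hb1 : betaSeq β (k+1) = (nDigit β k : ℝ) - 1 / betaSeq β k := rfl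
    have key : Rprod β (k+1) * ((nDigit β k : ℝ) - 1 / betaSeq β k)
        = (nDigit β k : ℝ) * Rprod β (k+1) - Rprod β k := by
      rw [hR1]; field_simp
    push_cast
    rw [hR, hb1, key]
    linear_combination (nDigit β k : ℝ) * hE - hE'

lemma det_eq : ∀ k, (qseq β k).1 * (pseq β k).2 - (qseq β k).2 * (pseq β k).1 = -1 := by
  intro k
  induction k with
  | zero => simp [qseq, pseq]
  | succ k ih =>
    show (nDigit β k * (qseq β k).1 - (qseq β k).2) * (pseq β k).1
        - (qseq β k).1 * (nDigit β k * (pseq β k).1 - (pseq β k).2) = -1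
    linear_combination ih

lemma one_lt_qR (hβ : Irrational β) (h0 : 0 < β) (h1 : β < 1) (k : ℕ) :
    ((qseq β k).1 : ℝ) * Rprod β k = 1 + ((qseq β k).2 : ℝ) * Rprod β (k+1) := by
  obtain ⟨hE, hE'⟩ := err_eq hβ h0 h1 k
  have hdet' : ((qseq β k).1 : ℝ) * (pseq β k).2 - ((qseq β k).2 : ℝ) * (pseq β k).1 = -1 := by
    exact_mod_cast det_eq (β := β) k
  linear_combination (-((qseq β k).1 : ℝ)) * hE' + ((qseq β k).2 : ℝ) * hE - hdet'

/-- Inverse of `q_k`: lower bound for `Rprod`. -/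
lemma Rprod_ge (hβ : Irrational β) (h0 : 0 < β) (h1 : β < 1) (k : ℕ) :
    1 ≤ ((qseq β k).1 : ℝ) * Rprod β k := by
  rw [one_lt_qR hβ h0 h1 k]
  have h2 : (0:ℝ) ≤ ((qseq β k).2 : ℝ) := by exact_mod_cast (qseq_pos hβ h0 h1 k).1
  have := Rprod_pos hβ h0 h1 (k+1)
  nlinarith

set_option maxHeartbeats 1000000 in
/-- Best approximation: for `1 ≤ h < q_k - q_{k-1}`, `|hβ - p| ≥ Rprod β k`. -/
lemma best_approx (hβ : Irrational β) (h0 : 0 < β) (h1 : β < 1) (k : ℕ) (hk : 1 ≤ k)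
    (h p : ℤ) (hh1 : 1 ≤ h) (hh2 : h < (qseq β k).1 - (qseq β k).2) :
    Rprod β k ≤ |(h:ℝ) * β - p| := by
  obtain ⟨hE, hE'⟩ := err_eq hβ h0 h1 k
  set u : ℤ := (qseq β k).2 with hu
  set v : ℤ := (qseq β k).1 - (qseq β k).2 with hv
  set a : ℤ := (pseq β k).2 with ha
  set b : ℤ := (pseq β k).1 - (pseq β k).2 with hb
  have hdet : u * b - v * a = 1 := by
    have := det_eq (β := β) k
    simp only [hu, hv, ha, hb]; linarith
  set x : ℤ := b * h - v * p with hx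
  set y : ℤ := u * p - a * h with hy
  have hxy1 : x * u + y * v = h := by simp only [hx, hy]; linear_combination h * hdet
  have hxy2 : x * a + y * b = p := by simp only [hx, hy]; linear_combination p * hdet
  have hu1 : 1 ≤ u := by
    rcases k with _ | k
    · omega
    · have := qseq_pos hβ h0 h1 k
      simp only [hu, qseq_snd]
      omega
  have hv1 : 1 ≤ v := by
    have := qseq_pos hβ h0 h1 k
    omega
  have heu : (u:ℝ) * β - a = Rprod β k := hE'
  have hev : (v:ℝ) * β - b = Rprod β (k+1) - Rprod β k := by
    simp only [hv, hb]; push_cast; linarith [hE, hE']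
  have hRk := Rprod_pos hβ h0 h1 k
  have hBk := (betaSeq_props hβ h0 h1 k).2
  have hR1 : Rprod β (k+1) = Rprod β k * betaSeq β k := by
    simp [Rprod, Finset.prod_range_succ]
  have hev_neg : (v:ℝ) * β - b < 0 := by rw [hev, hR1]; nlinarith [hBk.1, hBk.2]
  have hev_gt : -((v:ℝ) * β - b) < Rprod β k := by rw [hev, hR1]; nlinarith [hBk.1, hBk.2]
  have c1 : (x:ℝ) * u + (y:ℝ) * v = (h:ℝ) := by exact_mod_cast hxy1
  have c2 : (x:ℝ) * a + (y:ℝ) * b = (p:ℝ) := by exact_mod_cast hxy2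
  have hkey : (h:ℝ) * β - p = (x:ℝ) * ((u:ℝ)*β - a) + (y:ℝ) * ((v:ℝ)*β - b) := by
    linear_combination (-β) * c1 + c2
  rw [hkey, heu]
  set ev : ℝ := (v:ℝ) * β - b with hev'
  clear_value ev
  clear_value x y
  clear_value a b u v
  rcases lt_trichotomy y 0 with hyn | hy0 | hyp
  · -- y ≤ -1, hence x ≥ 1
    have hx1 : 1 ≤ x := by
      by_contra hc
      push_neg at hc
      have q1 : x * u ≤ 0 := mul_nonpos_of_nonpos_of_nonneg (by omega) (by omega)
      have q2 : y * v ≤ -v := by nlinarith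
      linarith
    have hx1' : (1:ℝ) ≤ (x:ℝ) := by exact_mod_cast hx1
    have hy1' : (y:ℝ) ≤ -1 := by exact_mod_cast (by omega : y ≤ -1)
    have p1 : Rprod β k ≤ (x:ℝ) * Rprod β k := by nlinarith
    have p2 : -ev ≤ (y:ℝ) * ev := by nlinarith
    have : Rprod β k ≤ (x:ℝ) * Rprod β k + (y:ℝ) * ev := by nlinarith
    exact le_trans this (le_abs_self _)
  · -- y = 0 : x ≥ 1
    have hy0' : (y:ℝ) = 0 := by exact_mod_cast hy0
    have hx1 : 1 ≤ x := by
      by_contra hc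
      push_neg at hc
      have q1 : x * u ≤ 0 := mul_nonpos_of_nonpos_of_nonneg (by omega) (by omega)
      have q2 : y * v = 0 := by rw [hy0]; ring
      linarith
    have hx1' : (1:ℝ) ≤ (x:ℝ) := by exact_mod_cast hx1
    have : Rprod β k ≤ (x:ℝ) * Rprod β k + (y:ℝ) * ev := by
      rw [hy0', zero_mul, add_zero]
      nlinarith
    exact le_trans this (le_abs_self _)
  · -- y ≥ 1, hence x ≤ -1
    have hx1 : x ≤ -1 := by
      by_contra hc
      push_neg at hc
      have q1 : 0 ≤ x * u := mul_nonneg (by omega) (by omega)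
      have q2 : v ≤ y * v := by nlinarith
      linarith
    have hx1' : (x:ℝ) ≤ -1 := by exact_mod_cast hx1
    have hy1' : (1:ℝ) ≤ (y:ℝ) := by exact_mod_cast hyp
    have p1 : (x:ℝ) * Rprod β k ≤ -Rprod β k := by nlinarith
    have p2 : (y:ℝ) * ev ≤ ev := by nlinarith
    have : Rprod β k ≤ -((x:ℝ) * Rprod β k + (y:ℝ) * ev) := by nlinarith
    exact le_trans this (neg_le_abs _)

lemma ell_eq_qseq (hβ : Irrational β) (h0 : 0 < β) (h1 : β < 1) :
    ∀ k, ((ell β k).1 : ℤ) = (qseq β k).1 ∧ ((ell β k).2 : ℤ) = (qseq β k).1 - (qseq β k).2 := by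
  intro k
  induction k with
  | zero => simp [ell, qseq]
  | succ k ih =>
    obtain ⟨i1, i2⟩ := ih
    have hn := nDigit_ge_two hβ h0 h1 k
    have t1 : ((nDigit β k - 1).toNat : ℤ) = nDigit β k - 1 := by omega
    have t2 : ((nDigit β k - 2).toNat : ℤ) = nDigit β k - 2 := by omega
    constructor
    · show (((nDigit β k - 1).toNat * (ell β k).1 + (ell β k).2 : ℕ) : ℤ)
        = nDigit β k * (qseq β k).1 - (qseq β k).2
      push_cast [t1, i1, i2]; ring
    · show (((nDigit β k - 2).toNat * (ell β k).1 + (ell β k).2 : ℕ) : ℤ)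
        = (nDigit β k * (qseq β k).1 - (qseq β k).2) - (qseq β k).1
      push_cast [t2, i1, i2]; ring

lemma ell_fst_pos (hβ : Irrational β) (h0 : 0 < β) (h1 : β < 1) (k : ℕ) :
    1 ≤ (ell β k).1 := by
  obtain ⟨i1, -⟩ := ell_eq_qseq hβ h0 h1 k
  have := qseq_pos hβ h0 h1 k
  omega

lemma ell_snd_le_fst (hβ : Irrational β) (h0 : 0 < β) (h1 : β < 1) (k : ℕ) :
    (ell β k).2 ≤ (ell β k).1 := by
  obtain ⟨i1, i2⟩ := ell_eq_qseq hβ h0 h1 k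
  have := qseq_pos hβ h0 h1 k
  omega

lemma ell_snd_pos (hβ : Irrational β) (h0 : 0 < β) (h1 : β < 1) (k : ℕ) :
    1 ≤ (ell β k).2 := by
  obtain ⟨i1, i2⟩ := ell_eq_qseq hβ h0 h1 k
  have := qseq_pos hβ h0 h1 k
  omega

/-- The main gap lemma: for `1 ≤ h < ℓ_k(1)`, `1/ℓ_k(0) ≤ |hβ - p|`. -/
lemma gap_lemma (hβ : Irrational β) (h0 : 0 < β) (h1 : β < 1) (k : ℕ) (hk : 1 ≤ k)
    (h : ℕ) (hh1 : 1 ≤ h) (hh2 : h < (ell β k).2) (p : ℤ) :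
    1 / ((ell β k).1 : ℝ) ≤ |(h:ℝ) * β - p| := by
  obtain ⟨i1, i2⟩ := ell_eq_qseq hβ h0 h1 k
  have hba := best_approx hβ h0 h1 k hk (h : ℤ) p (by exact_mod_cast hh1)
    (by rw [← i2]; exact_mod_cast hh2)
  have hq1' : 1 ≤ (ell β k).1 := ell_fst_pos hβ h0 h1 k
  have hq1 : (0:ℝ) < ((ell β k).1 : ℝ) := by exact_mod_cast hq1'
  have hqr : ((ell β k).1 : ℝ) = ((qseq β k).1 : ℝ) := by exact_mod_cast i1
  have hRge := Rprod_ge hβ h0 h1 k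
  have hle : 1 / ((ell β k).1 : ℝ) ≤ Rprod β k := by
    rw [div_le_iff₀ hq1, hqr, mul_comm]
    exact hRge
  refine le_trans hle ?_
  have : ((h:ℕ):ℝ) = (((h:ℕ):ℤ):ℝ) := by push_cast; ring
  rw [this]
  exact hba

/-! ### basic phi lemmas -/

lemma phi_int_add (x : ℝ) (z : ℤ) : phi (x + z) = phi x := by
  unfold phi
  rw [Int.fract_add_intCast]

lemma phiN_int_add (α : ℝ) (j : ℕ) (x : ℝ) (z : ℤ) : phiN α j (x + z) = phiN α j x := by
  unfold phiN
  apply Finset.sum_congr rfl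
  intro i _
  rw [show x + (z:ℝ) + i * α = (x + i * α) + z by ring, phi_int_add]

lemma phiN_add (α : ℝ) (a b : ℕ) (x : ℝ) :
    phiN α (a + b) x = phiN α a x + phiN α b (x + a * α) := by
  unfold phiN
  rw [Finset.sum_range_add]
  congr 1
  apply Finset.sum_congr rfl
  intro i _
  congr 1
  push_cast
  ring

lemma phi_shift (z t δv : ℝ) (ht0 : 0 ≤ t) (htδ : t < δv)
    (hz : ∀ p : ℤ, δv ≤ |z - p / 2|) : phi (z + t) = phi z := by
  set F := Int.fract z with hFdef
  have hF : z = (⌊z⌋ : ℝ) + F := by rw [hFdef, Int.fract]; ring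
  have hF0 : 0 ≤ F := Int.fract_nonneg z
  have hF1 : F < 1 := Int.fract_lt_one z
  have e1 : δv ≤ |F| := by
    have h := hz (2 * ⌊z⌋)
    have e : z - ((2 * ⌊z⌋ : ℤ) : ℝ) / 2 = F := by
      rw [hFdef, Int.fract]; push_cast; ring
    rwa [e] at h
  have e2 : δv ≤ |F - 1/2| := by
    have h := hz (2 * ⌊z⌋ + 1)
    have e : z - ((2 * ⌊z⌋ + 1 : ℤ) : ℝ) / 2 = F - 1/2 := by
      rw [hFdef, Int.fract]; push_cast; ring
    rwa [e] at h
  have e3 : δv ≤ |F - 1| := by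
    have h := hz (2 * ⌊z⌋ + 2)
    have e : z - ((2 * ⌊z⌋ + 2 : ℤ) : ℝ) / 2 = F - 1 := by
      rw [hFdef, Int.fract]; push_cast; ring
    rwa [e] at h
  have hFd : δv ≤ F := by
    rw [abs_of_nonneg hF0] at e1; exact e1
  have hFu : F ≤ 1 - δv := by
    rw [abs_of_nonpos (by linarith)] at e3; linarith
  have hfz : Int.fract (z + t) = F + t := by
    rw [hF, add_assoc, add_comm (⌊z⌋ : ℝ), Int.fract_add_intCast]
    exact Int.fract_eq_self.2 ⟨by linarith, by linarith⟩
  unfold phi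
  rw [hfz, ← hFdef]
  rcases lt_or_ge F (1/2) with h | h
  · have : F ≤ 1/2 - δv := by
      rw [abs_of_neg (by linarith)] at e2; linarith
    rw [if_pos (by linarith), if_pos h]
  · rw [if_neg (by push_neg; linarith), if_neg (by push_neg; linarith)]

lemma phiN_shift (α : ℝ) (j : ℕ) (y t δv : ℝ) (ht0 : 0 ≤ t) (htδ : t < δv)
    (hz : ∀ i < j, ∀ p : ℤ, δv ≤ |y + i * α - p / 2|) :
    phiN α j (y + t) = phiN α j y := by
  unfold phiN
  apply Finset.sum_congr rfl
  intro i hi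
  rw [show y + t + i * α = (y + i * α) + t by ring]
  exact phi_shift _ _ _ ht0 htδ (hz i (Finset.mem_range.1 hi))

lemma measurable_phi : Measurable phi := by
  unfold phi
  exact Measurable.ite (measurableSet_lt measurable_fract measurable_const)
    measurable_const measurable_const

lemma measurable_phiN (α : ℝ) (j : ℕ) : Measurable (phiN α j) := by
  unfold phiN
  exact Finset.measurable_sum _ (fun i _ =>
    measurable_phi.comp (measurable_id.add_const _))

lemma measurableSet_Aset (α : ℝ) (j : ℕ) : MeasurableSet {x : ℝ | phiN α j x = 0} :=
  measurable_phiN α j (measurableSet_singleton 0)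

open scoped Classical in
/-- Counting visits versus measure. -/
lemma count_le_measure (α : ℝ) (N L j : ℕ) (hN : 1 ≤ N)
    (gapα : ∀ h : ℕ, 1 ≤ h → h < L → ∀ p : ℤ, 1/(2*(N:ℝ)) ≤ |(h:ℝ) * α - p / 2|) :
    (((Finset.Icc 1 L).filter (fun m => m + j ≤ L ∧ phiN α j (m * α) = 0)).card : ℝ)
      * (1/(2*(N:ℝ))) ≤ (volume ({x : ℝ | phiN α j x = 0} ∩ Set.Ico (0:ℝ) 1)).toReal := by
  set δv : ℝ := 1/(2*(N:ℝ)) with hδ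
  have hN' : (1:ℝ) ≤ (N:ℝ) := by exact_mod_cast hN
  have hδ0 : 0 < δv := by rw [hδ]; positivity
  have hδhalf : δv ≤ 1/2 := by
    rw [hδ]
    rw [div_le_div_iff₀ (by linarith) (by norm_num)]
    linarith
  set M := (Finset.Icc 1 L).filter (fun m => m + j ≤ L ∧ phiN α j (m * α) = 0) with hM
  set y : ℕ → ℝ := fun m => Int.fract (m * α) with hy
  set J : ℕ → Set ℝ := fun m =>
    Set.Ico (y m) (min (y m + δv) 1) ∪ Set.Ico 0 (y m + δv - 1) with hJ
  have hy0 : ∀ m, 0 ≤ y m := fun m => Int.fract_nonneg _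
  have hy1 : ∀ m, y m < 1 := fun m => Int.fract_lt_one _
  -- membership extraction
  have hmem : ∀ m, ∀ x ∈ J m, ∃ e : ℤ, (e = 0 ∨ e = 1) ∧
      0 ≤ x + e - y m ∧ x + e - y m < δv ∧ 0 ≤ x ∧ x < 1 := by
    intro m x hx
    rcases hx with hx | hx
    · obtain ⟨ha, hb⟩ := hx
      refine ⟨0, Or.inl rfl, by push_cast; linarith, by push_cast; nlinarith [lt_min_iff.1 hb], ?_, ?_⟩
      · linarith [hy0 m]
      · have := (lt_min_iff.1 hb).2; linarith
    · obtain ⟨ha, hb⟩ := hx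
      refine ⟨1, Or.inr rfl, by push_cast; nlinarith [hy1 m], by push_cast; linarith, ha, ?_⟩
      have := hy1 m; linarith
  -- each J m is inside the level set
  have hsub : ∀ m ∈ M, J m ⊆ {x : ℝ | phiN α j x = 0} ∩ Set.Ico (0:ℝ) 1 := by
    intro m hm x hx
    simp only [hM, Finset.mem_filter, Finset.mem_Icc] at hm
    obtain ⟨⟨hm1, hmL⟩, hmjL, hm0⟩ := hm
    obtain ⟨e, he, ht0, htδ, hx0, hx1⟩ := hmem m x hx
    have hyval : phiN α j (y m) = 0 := by
      have : y m = (m:ℝ) * α + ((-⌊(m:ℝ)*α⌋ : ℤ) : ℝ) := by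
        show Int.fract ((m:ℝ) * α) = _
        rw [Int.fract]; push_cast; ring
      rw [this, phiN_int_add, hm0]
    have hshift : phiN α j (y m + (x + e - y m)) = phiN α j (y m) := by
      apply phiN_shift α j _ _ δv ht0 htδ
      intro i hi p
      have hcast : y m + (i:ℝ) * α - (p:ℝ)/2
          = ((m + i : ℕ):ℝ) * α - ((p + 2*⌊(m:ℝ)*α⌋ : ℤ):ℝ)/2 := by
        show Int.fract ((m:ℝ)*α) + (i:ℝ) * α - (p:ℝ)/2 = _
        rw [Int.fract]; push_cast; ring
      rw [hcast]
      exact gapα (m+i) (by omega) (by omega) _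
    have hxev : phiN α j x = 0 := by
      have : phiN α j (x + e) = 0 := by
        rw [show x + (e:ℝ) = y m + (x + e - y m) by ring, hshift, hyval]
      rwa [phiN_int_add] at this
    exact ⟨hxev, hx0, hx1⟩
  -- disjointness
  have hdisj : (↑M : Set ℕ).PairwiseDisjoint J := by
    have key : ∀ m' ∈ M, ∀ m ∈ M, m' < m → Disjoint (J m) (J m') := by
      intro m' hm' m hm hlt
      simp only [hM, Finset.mem_filter, Finset.mem_Icc] at hm hm'
      rw [Set.disjoint_left]
      rintro x hxm hxm'
      obtain ⟨e, he, ht0, htδ, -, -⟩ := hmem m x hxm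
      obtain ⟨e', he', ht0', htδ', -, -⟩ := hmem m' x hxm'
      set t := x + e - y m
      set t' := x + e' - y m'
      have hq : ((m - m' : ℕ) : ℝ) * α
          - ((⌊(m:ℝ)*α⌋ - ⌊(m':ℝ)*α⌋ + e - e' : ℤ):ℝ) = t' - t := by
        have hyeq : y m = (m:ℝ)*α - ⌊(m:ℝ)*α⌋ := by
          show Int.fract ((m:ℝ)*α) = _; rw [Int.fract]
        have hyeq' : y m' = (m':ℝ)*α - ⌊(m':ℝ)*α⌋ := by
          show Int.fract ((m':ℝ)*α) = _; rw [Int.fract]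
        have hmm : ((m - m' : ℕ) : ℝ) = (m:ℝ) - (m':ℝ) := by
          push_cast [Nat.cast_sub hlt.le]; ring
        rw [hmm]
        simp only [t, t', hyeq, hyeq']
        push_cast
        ring
      have habs : |t' - t| < δv := by
        rw [abs_lt]; constructor <;> linarith
      have hgap := gapα (m - m') (by omega) (by omega)
        (2 * (⌊(m:ℝ)*α⌋ - ⌊(m':ℝ)*α⌋ + e - e'))
      rw [show ((2 * (⌊(m:ℝ)*α⌋ - ⌊(m':ℝ)*α⌋ + e - e') : ℤ):ℝ)/2
          = ((⌊(m:ℝ)*α⌋ - ⌊(m':ℝ)*α⌋ + e - e' : ℤ):ℝ) by push_cast; ring, hq] at hgap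
      linarith [habs, hgap]
    intro a ha b hb hab
    rcases lt_or_gt_of_ne hab with h | h
    · exact (key a ha b hb h).symm
    · exact key b hb a ha h
  -- volume lower bound for each J m
  have hvol : ∀ m, ENNReal.ofReal δv ≤ volume (J m) := by
    intro m
    rcases le_or_gt (y m + δv) 1 with hc | hc
    · refine le_trans ?_ (measure_mono Set.subset_union_left)
      rw [min_eq_left hc, Real.volume_Ico]
      apply le_of_eq; congr 1; ring
    · have hdisj2 : Disjoint (Set.Ico (y m) (min (y m + δv) 1)) (Set.Ico (0:ℝ) (y m + δv - 1)) := by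
        rw [Set.disjoint_left]
        rintro x ⟨ha, -⟩ ⟨-, hb⟩
        have : δv ≤ 1 := by linarith
        linarith
      show ENNReal.ofReal δv ≤ volume (Set.Ico (y m) (min (y m + δv) 1) ∪ Set.Ico 0 (y m + δv - 1))
      rw [measure_union hdisj2 measurableSet_Ico, Real.volume_Ico, Real.volume_Ico,
        min_eq_right hc.le]
      rw [← ENNReal.ofReal_add (by linarith [hy1 m]) (by linarith)]
      apply le_of_eq; congr 1; ring
  have hJmeas : ∀ m ∈ M, MeasurableSet (J m) :=
    fun m _ => measurableSet_Ico.union measurableSet_Ico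
  have hsum : (M.card : ℝ≥0∞) * ENNReal.ofReal δv
      ≤ volume ({x : ℝ | phiN α j x = 0} ∩ Set.Ico (0:ℝ) 1) := by
    calc (M.card : ℝ≥0∞) * ENNReal.ofReal δv = ∑ _m ∈ M, ENNReal.ofReal δv := by
          rw [Finset.sum_const, nsmul_eq_mul]
    _ ≤ ∑ m ∈ M, volume (J m) := Finset.sum_le_sum (fun m _ => hvol m)
    _ = volume (⋃ m ∈ M, J m) := (measure_biUnion_finset hdisj hJmeas).symm
    _ ≤ volume ({x : ℝ | phiN α j x = 0} ∩ Set.Ico (0:ℝ) 1) :=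
        measure_mono (Set.iUnion₂_subset hsub)
  have hfin : volume ({x : ℝ | phiN α j x = 0} ∩ Set.Ico (0:ℝ) 1) ≠ ⊤ := by
    apply ne_top_of_le_ne_top _ (measure_mono Set.inter_subset_right)
    simp [Real.volume_Ico]
  have hres := ENNReal.toReal_mono hfin hsum
  rw [ENNReal.toReal_mul, ENNReal.toReal_natCast, ENNReal.toReal_ofReal hδ0.le] at hres
  exact hres

lemma integral_Psi (α : ℝ) (N : ℕ) :
    ∫ x in Set.Ico (0:ℝ) 1, (Psi α N x : ℝ)
      = ∑ j ∈ Finset.range N,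
          (volume ({x : ℝ | phiN α j x = 0} ∩ Set.Ico (0:ℝ) 1)).toReal := by
  have hPsi : ∀ x : ℝ, ((Psi α N x : ℕ) : ℝ)
      = ∑ j ∈ Finset.range N,
          Set.indicator {y : ℝ | phiN α j y = 0} (fun _ => (1:ℝ)) x := by
    intro x
    rw [Psi, Finset.card_filter]
    push_cast
    apply Finset.sum_congr rfl
    intro j _
    by_cases h : phiN α j x = 0
    · simp [Set.indicator, h]
    · simp [Set.indicator, h]
  have hstep : (∫ x in Set.Ico (0:ℝ) 1, (Psi α N x : ℝ))
      = ∫ x in Set.Ico (0:ℝ) 1, (∑ j ∈ Finset.range N,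
          Set.indicator {y : ℝ | phiN α j y = 0} (fun _ => (1:ℝ)) x) := by
    apply integral_congr_ae
    filter_upwards with x using hPsi x
  rw [hstep, integral_finset_sum]
  · apply Finset.sum_congr rfl
    intro j _
    rw [setIntegral_indicator (measurableSet_Aset α j), setIntegral_const, smul_eq_mul,
      mul_one, Set.inter_comm, Measure.real_def]
  · intro j _
    exact (integrableOn_const (by simp [Real.volume_Ico])).indicator
      (measurableSet_Aset α j)

open scoped Classical in
lemma sumU_le (α : ℝ) (L : ℕ) :
    ∑ ν ∈ (Finset.Icc 1 L).image (fun n => phiN α n 0),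
        ((Finset.Icc 1 L).filter (fun n => phiN α n 0 = ν)).card ^ 2
      ≤ 2 * ∑ j ∈ Finset.range L,
        ((Finset.Icc 1 L).filter (fun m => m + j ≤ L ∧ phiN α j (m * α) = 0)).card := by
  set s : ℕ → ℤ := fun n => phiN α n 0 with hs
  set S := Finset.Icc 1 L with hS
  have hcoc : ∀ m n : ℕ, 1 ≤ m → m ≤ n → (s n = s m ↔ phiN α (n - m) ((m:ℝ) * α) = 0) := by
    intro m n _ hmn
    have h1 : s n = s m + phiN α (n - m) ((m:ℝ) * α) := by
      have h2 : phiN α n 0 = phiN α m 0 + phiN α (n - m) (0 + (m:ℝ) * α) := by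
        rw [← phiN_add]
        congr 1
        omega
      rw [zero_add] at h2
      exact h2
    rw [h1]
    exact add_eq_left
  set P := (S ×ˢ S).filter (fun q : ℕ × ℕ => s q.2 = s q.1) with hPdef
  have hP : P.card = ∑ ν ∈ S.image s, ((S.filter (fun n => s n = ν)).card)^2 := by
    rw [Finset.card_eq_sum_card_fiberwise
      (f := fun q : ℕ × ℕ => s q.1) (t := S.image s)
      (fun q hq => by
        simp only [Finset.mem_coe, hPdef, Finset.mem_filter, Finset.mem_product] at hq
        exact Finset.mem_image_of_mem s hq.1.1)]
    apply Finset.sum_congr rfl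
    intro ν _
    have hfib : P.filter (fun q : ℕ × ℕ => s q.1 = ν)
        = (S.filter fun n => s n = ν) ×ˢ (S.filter fun n => s n = ν) := by
      ext q
      simp only [hPdef, Finset.mem_filter, Finset.mem_product]
      constructor
      · rintro ⟨⟨⟨h1, h2⟩, h3⟩, h4⟩
        exact ⟨⟨h1, h4⟩, ⟨h2, h3.trans h4⟩⟩
      · rintro ⟨⟨h1, h4⟩, ⟨h2, h3⟩⟩
        exact ⟨⟨⟨h1, h2⟩, h3.trans h4.symm⟩, h4⟩
    rw [hfib, Finset.card_product]
    ring
  set W := (Finset.range L ×ˢ S).filter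
      (fun q : ℕ × ℕ => q.2 + q.1 ≤ L ∧ phiN α q.1 ((q.2:ℝ) * α) = 0) with hWdef
  have hW : W.card = ∑ j ∈ Finset.range L,
      ((S.filter (fun m => m + j ≤ L ∧ phiN α j ((m:ℝ) * α) = 0)).card) := by
    rw [Finset.card_eq_sum_card_fiberwise
      (f := fun q : ℕ × ℕ => q.1) (t := Finset.range L)
      (fun q hq => by
        simp only [Finset.mem_coe, hWdef, Finset.mem_filter, Finset.mem_product] at hq
        exact hq.1.1)]
    apply Finset.sum_congr rfl
    intro j hj
    apply Finset.card_bij (fun q _ => q.2)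
    · intro q hq
      simp only [hWdef, Finset.mem_filter, Finset.mem_product] at hq ⊢
      obtain ⟨⟨⟨-, h2⟩, h3, h4⟩, h5⟩ := hq
      refine ⟨h2, ?_, ?_⟩
      · rw [← h5]; exact h3
      · rw [← h5]; exact h4
    · intro q hq q' hq' hqq
      simp only [hWdef, Finset.mem_filter, Finset.mem_product] at hq hq'
      exact Prod.ext (hq.2.trans hq'.2.symm) hqq
    · intro m hm
      simp only [Finset.mem_filter] at hm
      refine ⟨(j, m), ?_, rfl⟩
      simp only [hWdef, Finset.mem_filter, Finset.mem_product]
      exact ⟨⟨⟨hj, hm.1⟩, hm.2.1, hm.2.2⟩, trivial⟩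
  have hinj1 : (P.filter (fun q : ℕ × ℕ => q.2 ≤ q.1)).card ≤ W.card := by
    apply Finset.card_le_card_of_injOn (fun q => (q.1 - q.2, q.2))
    · intro q hq
      simp only [Finset.mem_coe, hPdef, Finset.mem_filter, Finset.mem_product, hS, Finset.mem_Icc] at hq
      obtain ⟨⟨⟨⟨h11, h12⟩, h21, h22⟩, heq⟩, hle⟩ := hq
      simp only [Finset.mem_coe, hWdef, Finset.mem_filter, Finset.mem_product, hS, Finset.mem_Icc,
        Finset.mem_range]
      refine ⟨⟨by omega, h21, h22⟩, by omega, ?_⟩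
      exact (hcoc q.2 q.1 h21 hle).1 heq.symm
    · intro q hq q' hq' hqq
      simp only [Finset.coe_filter, Set.mem_setOf_eq] at hq hq'
      simp only [Prod.mk.injEq] at hqq
      obtain ⟨e1, e2⟩ := hqq
      have hle := hq.2
      have hle' := hq'.2
      exact Prod.ext (by omega) e2
  have hinj2 : (P.filter (fun q : ℕ × ℕ => ¬ q.2 ≤ q.1)).card ≤ W.card := by
    apply Finset.card_le_card_of_injOn (fun q => (q.2 - q.1, q.1))
    · intro q hq
      simp only [Finset.mem_coe, hPdef, Finset.mem_filter, Finset.mem_product, hS, Finset.mem_Icc] at hq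
      obtain ⟨⟨⟨⟨h11, h12⟩, h21, h22⟩, heq⟩, hle⟩ := hq
      simp only [Finset.mem_coe, hWdef, Finset.mem_filter, Finset.mem_product, hS, Finset.mem_Icc,
        Finset.mem_range]
      refine ⟨⟨by omega, h11, h12⟩, by omega, ?_⟩
      exact (hcoc q.1 q.2 h11 (by omega)).1 heq
    · intro q hq q' hq' hqq
      simp only [Finset.coe_filter, Set.mem_setOf_eq] at hq hq'
      simp only [Prod.mk.injEq] at hqq
      obtain ⟨e1, e2⟩ := hqq
      have hle := hq.2
      have hle' := hq'.2
      exact Prod.ext e2 (by omega)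
  have hsplit := Finset.card_filter_add_card_filter_not
    (s := P) (p := fun q : ℕ × ℕ => q.2 ≤ q.1)
  calc ∑ ν ∈ S.image s, ((S.filter (fun n => s n = ν)).card)^2 = P.card := hP.symm
  _ = (P.filter (fun q : ℕ × ℕ => q.2 ≤ q.1)).card
      + (P.filter (fun q : ℕ × ℕ => ¬ q.2 ≤ q.1)).card := hsplit.symm
  _ ≤ W.card + W.card := Nat.add_le_add hinj1 hinj2
  _ = 2 * W.card := by ring
  _ = 2 * ∑ j ∈ Finset.range L,
        ((S.filter (fun m => m + j ≤ L ∧ phiN α j ((m:ℝ) * α) = 0)).card) := by rw [hW]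

end Aux

theorem visit_distribution_lower_bound
    (α : ℝ) (h0 : 0 < α) (h1 : α < 1/2) (hirr : Irrational α)
    (k : ℕ) (hk : 1 ≤ k) :
    (1 / (4 * ((ell (2*α) k).1 : ℝ))) * ∑' ν : ℤ, ((visitU α k 1 ν : ℝ))^2 ≤
      ∫ x in Set.Ico (0:ℝ) 1, (Psi α (ell (2*α) k).1 x : ℝ) := by
  classical
  set β := 2*α with hβdef
  have hβ0 : 0 < β := by rw [hβdef]; linarith
  have hβ1 : β < 1 := by rw [hβdef]; linarith
  have hβirr : Irrational β := by
    have h2 : ((2:ℚ):ℝ) = (2:ℝ) := by norm_num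
    rw [hβdef, ← h2]
    exact hirr.ratCast_mul (by norm_num)
  set N := (ell β k).1 with hN
  set L := (ell β k).2 with hL
  have hN1 : 1 ≤ N := ell_fst_pos hβirr hβ0 hβ1 k
  have hL1 : 1 ≤ L := ell_snd_pos hβirr hβ0 hβ1 k
  have hLN : L ≤ N := ell_snd_le_fst hβirr hβ0 hβ1 k
  have hNR : (1:ℝ) ≤ (N:ℝ) := by exact_mod_cast hN1
  -- the gap estimate, in terms of α and half-integers
  have gapα : ∀ h : ℕ, 1 ≤ h → h < L → ∀ p : ℤ, 1/(2*(N:ℝ)) ≤ |(h:ℝ) * α - p / 2| := by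
    intro h hh1 hh2 p
    have hg := gap_lemma hβirr hβ0 hβ1 k hk h hh1 hh2 p
    have habs : |(h:ℝ) * α - p/2| = |(h:ℝ) * β - p| / 2 := by
      rw [hβdef, show (h:ℝ)*(2*α) - p = 2*((h:ℝ)*α - p/2) by ring, abs_mul, abs_two]
      ring
    rw [habs]
    rw [← hN] at hg
    have : 1/(2*(N:ℝ)) = (1/(N:ℝ))/2 := by ring
    rw [this]
    linarith
  -- counting bound for each level set
  have hcnt : ∀ j : ℕ,
      (((Finset.Icc 1 L).filter (fun m => m + j ≤ L ∧ phiN α j (m * α) = 0)).card : ℝ)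
      ≤ 2*(N:ℝ) * (volume ({x : ℝ | phiN α j x = 0} ∩ Set.Ico (0:ℝ) 1)).toReal := by
    intro j
    have hc := count_le_measure α N L j hN1 gapα
    have h2N : (0:ℝ) < 2*(N:ℝ) := by positivity
    set c := (((Finset.Icc 1 L).filter (fun m => m + j ≤ L ∧ phiN α j (m * α) = 0)).card : ℝ)
    set mv := (volume ({x : ℝ | phiN α j x = 0} ∩ Set.Ico (0:ℝ) 1)).toReal
    calc c = (c * (1/(2*(N:ℝ)))) * (2*(N:ℝ)) := by field_simp
    _ ≤ mv * (2*(N:ℝ)) := mul_le_mul_of_nonneg_right hc h2N.le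
    _ = 2*(N:ℝ) * mv := by ring
  -- identify visitU with a filter-card over Icc 1 L
  have hU : ∀ ν : ℤ, visitU α k 1 ν = ((Finset.Icc 1 L).filter (fun n => phiN α n 0 = ν)).card := by
    intro ν
    rw [visitU, if_neg one_ne_zero, ← hβdef, ← hL]
  -- the tsum is a finite sum
  set T := (Finset.Icc 1 L).image (fun n => phiN α n 0) with hT
  have htsum : ∑' ν : ℤ, ((visitU α k 1 ν : ℝ))^2 = ∑ ν ∈ T, ((visitU α k 1 ν : ℝ))^2 := by
    apply tsum_eq_sum
    intro ν hν
    have hz : visitU α k 1 ν = 0 := by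
      rw [hU ν, Finset.card_eq_zero, Finset.filter_eq_empty_iff]
      intro n hn h
      exact hν (Finset.mem_image.2 ⟨n, hn, h⟩)
    rw [hz]
    norm_num
  -- main combinatorial estimate, cast to ℝ
  have hA : (∑ ν ∈ T, ((visitU α k 1 ν : ℝ))^2)
      ≤ 2 * ∑ j ∈ Finset.range L,
          (((Finset.Icc 1 L).filter (fun m => m + j ≤ L ∧ phiN α j (m * α) = 0)).card : ℝ) := by
    have hnat := sumU_le α L
    calc ∑ ν ∈ T, ((visitU α k 1 ν : ℝ))^2
        = ((∑ ν ∈ T, ((Finset.Icc 1 L).filter (fun n => phiN α n 0 = ν)).card ^ 2 : ℕ) : ℝ) := by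
          push_cast
          apply Finset.sum_congr rfl
          intro ν _
          rw [hU ν]
    _ ≤ ((2 * ∑ j ∈ Finset.range L,
          ((Finset.Icc 1 L).filter (fun m => m + j ≤ L ∧ phiN α j (m * α) = 0)).card : ℕ) : ℝ) := by
          exact_mod_cast hnat
    _ = 2 * ∑ j ∈ Finset.range L,
          (((Finset.Icc 1 L).filter (fun m => m + j ≤ L ∧ phiN α j (m * α) = 0)).card : ℝ) := by
          push_cast
          ring
  -- the integral identity
  have hI : (∫ x in Set.Ico (0:ℝ) 1, (Psi α N x : ℝ))
      = ∑ j ∈ Finset.range N, (volume ({x : ℝ | phiN α j x = 0} ∩ Set.Ico (0:ℝ) 1)).toReal :=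
    integral_Psi α N
  set mv : ℕ → ℝ := fun j => (volume ({x : ℝ | phiN α j x = 0} ∩ Set.Ico (0:ℝ) 1)).toReal with hmv
  have hmv0 : ∀ j, 0 ≤ mv j := fun j => ENNReal.toReal_nonneg
  have sum1 : ∑ j ∈ Finset.range L,
      (((Finset.Icc 1 L).filter (fun m => m + j ≤ L ∧ phiN α j (m * α) = 0)).card : ℝ)
      ≤ 2*(N:ℝ) * ∑ j ∈ Finset.range L, mv j := by
    rw [Finset.mul_sum]
    exact Finset.sum_le_sum (fun j _ => hcnt j)
  have sum2 : ∑ j ∈ Finset.range L, mv j ≤ ∑ j ∈ Finset.range N, mv j :=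
    Finset.sum_le_sum_of_subset_of_nonneg (Finset.range_subset_range.2 hLN) (fun j _ _ => hmv0 j)
  have hfinal : ∑ ν ∈ T, ((visitU α k 1 ν : ℝ))^2 ≤ 4*(N:ℝ) * ∑ j ∈ Finset.range N, mv j := by
    have h4 : 4*(N:ℝ) * ∑ j ∈ Finset.range L, mv j ≤ 4*(N:ℝ) * ∑ j ∈ Finset.range N, mv j := by
      apply mul_le_mul_of_nonneg_left sum2 (by positivity)
    nlinarith [hA, sum1]
  rw [htsum, hI]
  have h4N : (0:ℝ) < 4*(N:ℝ) := by positivity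
  calc (1 / (4 * (N:ℝ))) * ∑ ν ∈ T, ((visitU α k 1 ν : ℝ))^2
      ≤ (1 / (4 * (N:ℝ))) * (4*(N:ℝ) * ∑ j ∈ Finset.range N, mv j) := by
        apply mul_le_mul_of_nonneg_left hfinal (by positivity)
  _ = ∑ j ∈ Finset.range N, mv j := by
        field_simp
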